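/- If a search T of a PTS S has not found a violation of an LTL+ formula φ, then the set of execution paths of S_T satisfying φ that are not in B_{S_T}^φ(T) has measure zero, and consequently μ_{S_T}(B_{S_T}^φ(T)) = μ_{S_T}({ e ∈ Exec_{S_T} : e ⊨_{S_T} φ }). -/

import Mathlib

open MeasureTheory

/- ## LTL⁺ syntax and semantics -/

inductive LTLPlus (AP : Type) : Type where
  | tt : LTLPlus AP
  | ff : LTLPlus AP
  | atom : AP → LTLPlus AP
  | and : LTLPlus AP → LTLPlus AP → LTLPlus AP
  | or : LTLPlus AP → LTLPlus AP → LTLPlus AP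
  | next : LTLPlus AP → LTLPlus AP
  | untl : LTLPlus AP → LTLPlus AP → LTLPlus AP
  | release : LTLPlus AP → LTLPlus AP → LTLPlus AP

variable {AP : Type}

/-- The suffix `ρ[k…]` of an infinite word. -/
def shift (ρ : ℕ → Set AP) (k : ℕ) : ℕ → Set AP := fun n => ρ (n + k)

/-- Standard LTL satisfaction for the positive fragment. -/
def LTLSat : LTLPlus AP → (ℕ → Set AP) → Prop
  | .tt, _ => True
  | .ff, _ => False
  | .atom a, ρ => a ∈ ρ 0
  | .and φ ψ, ρ => LTLSat φ ρ ∧ LTLSat ψ ρ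
  | .or φ ψ, ρ => LTLSat φ ρ ∨ LTLSat ψ ρ
  | .next φ, ρ => LTLSat φ (shift ρ 1)
  | .untl φ ψ, ρ => ∃ j, LTLSat ψ (shift ρ j) ∧ ∀ i < j, LTLSat φ (shift ρ i)
  | .release φ ψ, ρ => ∀ j, LTLSat ψ (shift ρ j) ∨ ∃ i < j, LTLSat φ (shift ρ i)

/-- Concatenation `σρ` of a finite word with an infinite word. -/
def wcat (σ : List (Set AP)) (ρ : ℕ → Set AP) : ℕ → Set AP :=
  fun n => if h : n < σ.length then σ.get ⟨n, h⟩ else ρ (n - σ.length)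

/- ## Probabilistic transition systems -/

variable {State Tr : Type}

structure PTS (State Tr AP : Type) where
  states : Set State
  transitions : Set Tr
  countable_states : states.Countable
  countable_transitions : transitions.Countable
  init : State
  init_mem : init ∈ states
  source : Tr → State
  target : Tr → State
  prob : Tr → ℝ
  label : State → Set AP
  source_mem : ∀ t ∈ transitions, source t ∈ states
  target_mem : ∀ t ∈ transitions, target t ∈ states
  prob_pos : ∀ t ∈ transitions, 0 < prob t
  prob_le_one : ∀ t ∈ transitions, prob t ≤ 1
  prob_sum : ∀ s ∈ states,
    (∑' t : { t : Tr // t ∈ transitions ∧ source t = s }, prob t.1) = 1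

/-- An execution path: an infinite sequence of transitions starting at the
initial state, with matching targets and sources. -/
def PTS.IsExec (S : PTS State Tr AP) (e : ℕ → Tr) : Prop :=
  (∀ i, e i ∈ S.transitions) ∧ S.source (e 0) = S.init ∧
    ∀ i, S.target (e i) = S.source (e (i + 1))

/-- The finite sequence `l` is a prefix of the infinite sequence `e`. -/
def IsPrefixOf (l : List Tr) (e : ℕ → Tr) : Prop :=
  ∀ i : ℕ, ∀ h : i < l.length, l.get ⟨i, h⟩ = e i

/-- `l` is a finite prefix of some execution path of `S`, i.e. `l ∈ pref(Exec_S)`. -/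
def PTS.IsPrefExec (S : PTS State Tr AP) (l : List Tr) : Prop :=
  ∃ e, S.IsExec e ∧ IsPrefixOf l e

/-- The basic cylinder set `B_S^l` of a finite sequence of transitions. -/
def PTS.Cyl (S : PTS State Tr AP) (l : List Tr) : Set (ℕ → Tr) :=
  { e | S.IsExec e ∧ IsPrefixOf l e }

/-- `S'` extends the search `T` of `S`. -/
def PTS.Extends (S' S : PTS State Tr AP) (T : Finset Tr) : Prop :=
  (∀ t ∈ T, t ∈ S'.transitions) ∧ S'.init = S.init ∧
    ∀ t ∈ T, S'.source t = S.source t ∧ S'.target t = S.target t ∧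
      S'.prob t = S.prob t ∧
      S'.label (S'.source t) = S.label (S.source t) ∧
      S'.label (S'.target t) = S.label (S.target t)

/-- The trace of an execution path. -/
def PTS.traceOf (S : PTS State Tr AP) (e : ℕ → Tr) : ℕ → Set AP :=
  fun i => S.label (S.source (e i))

/-- Satisfaction `e ⊨_S φ` of a linear-time property (a set of infinite words). -/
def PTS.SatPath (S : PTS State Tr AP) (e : ℕ → Tr) (φ : Set (ℕ → Set AP)) : Prop :=
  S.traceOf e ∈ φ

instance : MeasurableSpace (ℕ → Tr) := ⊤

/-- `μ` behaves as the cylinder measure of the PTS `S`: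
`μ(B_S^{t₁…tₙ}) = Π prob(tᵢ)`. -/
def CylSpec (S : PTS State Tr AP) (μ : Measure (ℕ → Tr)) : Prop :=
  ∀ l : List Tr, S.IsPrefExec l →
    μ (S.Cyl l) = ENNReal.ofReal ((l.map S.prob).prod)

/-- The set `B_S^φ(T)`: union of the basic cylinder sets over `e ∈ T*` all of
whose execution paths satisfy `φ`. -/
def PTS.BPhi (S : PTS State Tr AP) (T : Finset Tr) (φ : Set (ℕ → Set AP)) :
    Set (ℕ → Tr) :=
  ⋃ l ∈ { l : List Tr | (∀ t ∈ l, t ∈ T) ∧ ∀ e ∈ S.Cyl l, S.SatPath e φ }, S.Cyl l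

/-- The set `E_S^φ(T)`. -/
def PTS.ESet (S : PTS State Tr AP) (T : Finset Tr) (φ : Set (ℕ → Set AP)) :
    Set (List Tr) :=
  { l | (∀ t ∈ l, t ∈ T) ∧ S.IsPrefExec l ∧ ∀ e ∈ S.Cyl l, S.SatPath e φ }

/-- The set `ME_S^φ(T)` of prefix-minimal elements of `E_S^φ(T)`. -/
def PTS.MESet (S : PTS State Tr AP) (T : Finset Tr) (φ : Set (ℕ → Set AP)) :
    Set (List Tr) :=
  { l ∈ S.ESet T φ | 0 < l.length → ∃ e ∈ S.Cyl l.dropLast, ¬ S.SatPath e φ }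

/-- The progress measure, relative to an assignment `M` of (cylinder) measures
to PTSs: the infimum over all extensions `S'` of `T` of `μ_{S'}(B_{S'}^φ(T))`. -/
noncomputable def progM (M : PTS State Tr AP → Measure (ℕ → Tr))
    (S : PTS State Tr AP) (T : Finset Tr) (φ : Set (ℕ → Set AP)) : ENNReal :=
  ⨅ S' : { S' : PTS State Tr AP // S'.Extends S T }, M S'.1 ((S'.1).BPhi T φ)

/-- The search `T` of `S` has not found a violation of `φ`. -/
def NotFoundViolation (S : PTS State Tr AP) (T : Finset Tr)
    (φ : Set (ℕ → Set AP)) : Prop :=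
  ∃ S' : PTS State Tr AP, S'.Extends S T ∧ ∀ e, S'.IsExec e → S'.SatPath e φ

/- ## The minimal extension S_T -/

open Classical in
/-- `out_S(s)`: total explored outgoing probability of `s`. -/
noncomputable def outP (S : PTS State Tr AP) (T : Finset Tr) (s : State) : ℝ :=
  ∑ t ∈ T.filter (fun t => S.source t = s), S.prob t

/-- The set `S^T_S` of explored states. -/
def STStates (S : PTS State Tr AP) (T : Finset Tr) : Set State :=
  S.source '' ↑T ∪ S.target '' ↑T ∪ {S.init}

/-- `ST` is (a copy of) the minimal extension `S_T` of the search `T` of `S`: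
it has the explored states plus a fresh sink state `s⊥` with empty label and a
probability-one self loop `t⊥`, the explored transitions with unchanged data,
and, for each explored state with explored outgoing probability less than one,
a fresh transition to the sink carrying the residual probability. -/
def IsMinExt (S : PTS State Tr AP) (T : Finset Tr) (ST : PTS State Tr AP) : Prop :=
  ∃ (sbot : State) (tbot : Tr) (ts : State → Tr),
    sbot ∉ STStates S T ∧
    (∀ s, ts s ∉ T) ∧ tbot ∉ T ∧ (∀ s, ts s ≠ tbot) ∧
    Set.InjOn ts { s ∈ STStates S T | outP S T s < 1 } ∧
    ST.states = STStates S T ∪ {sbot} ∧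
    ST.transitions = ↑T ∪ ts '' { s ∈ STStates S T | outP S T s < 1 } ∪ {tbot} ∧
    ST.init = S.init ∧
    (∀ t ∈ T, ST.source t = S.source t ∧ ST.target t = S.target t ∧
      ST.prob t = S.prob t) ∧
    (∀ s ∈ STStates S T, outP S T s < 1 →
      ST.source (ts s) = s ∧ ST.target (ts s) = sbot ∧
      ST.prob (ts s) = 1 - outP S T s) ∧
    ST.source tbot = sbot ∧ ST.target tbot = sbot ∧ ST.prob tbot = 1 ∧
    ST.label sbot = ∅ ∧ (∀ s ∈ STStates S T, ST.label s = S.label s)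

/- ## Truncations and the prefix metric -/

/-- `e[n]`: the execution path `e` truncated at length `n`. -/
def trunc (e : ℕ → Tr) (n : ℕ) : List Tr := (List.range n).map e

/-- The distance `d(e₁,e₂) = inf { 2^{-n} : e₁[n] = e₂[n] }`. -/
noncomputable def pathDist (e₁ e₂ : ℕ → Tr) : ℝ :=
  sInf ((fun n : ℕ => ((1 : ℝ) / 2) ^ n) '' { n | trunc e₁ n = trunc e₂ n })

/-- `A` is closed with respect to the metric `pathDist`. -/
def ClosedPaths (A : Set (ℕ → Tr)) : Prop :=
  ∀ e, (∀ ε : ℝ, 0 < ε → ∃ e' ∈ A, pathDist e' e < ε) → e ∈ A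



/- ## Auxiliary machinery -/

section Aux

attribute [local instance 0] Classical.propDecidable

variable {State Tr AP : Type}

theorem LTLSat.mono : ∀ (φ : LTLPlus AP) (ρ ρ' : ℕ → Set AP),
    (∀ i, ρ i ⊆ ρ' i) → LTLSat φ ρ → LTLSat φ ρ'
  | .tt, _, _, _, _ => trivial
  | .ff, _, _, _, h => h.elim
  | .atom _, _, _, hsub, h => hsub 0 h
  | .and φ ψ, ρ, ρ', hsub, h =>
      ⟨LTLSat.mono φ ρ ρ' hsub h.1, LTLSat.mono ψ ρ ρ' hsub h.2⟩
  | .or φ ψ, ρ, ρ', hsub, h =>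
      h.elim (fun h => Or.inl (LTLSat.mono φ ρ ρ' hsub h))
        (fun h => Or.inr (LTLSat.mono ψ ρ ρ' hsub h))
  | .next φ, _, _, hsub, h => LTLSat.mono φ _ _ (fun i => hsub (i + 1)) h
  | .untl φ ψ, _, _, hsub, h => by
      obtain ⟨j, hj, hlt⟩ := h
      exact ⟨j, LTLSat.mono ψ _ _ (fun i => hsub (i + j)) hj,
        fun i hij => LTLSat.mono φ _ _ (fun k => hsub (k + i)) (hlt i hij)⟩
  | .release φ ψ, _, _, hsub, h => fun j =>
      (h j).elim (fun hj => Or.inl (LTLSat.mono ψ _ _ (fun i => hsub (i + j)) hj))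
        (fun ⟨i, hij, hi⟩ =>
          Or.inr ⟨i, hij, LTLSat.mono φ _ _ (fun k => hsub (k + i)) hi⟩)

lemma myprod_nonneg : ∀ l : List ℝ, (∀ x ∈ l, 0 ≤ x) → 0 ≤ l.prod := by
  intro l
  induction l with
  | nil => simp
  | cons a l ih =>
      intro h
      simp only [List.prod_cons]
      exact mul_nonneg (h a (by simp)) (ih fun x hx => h x (by simp [hx]))

lemma myprod_pos : ∀ l : List ℝ, (∀ x ∈ l, 0 < x) → 0 < l.prod := by
  intro l
  induction l with
  | nil => simp
  | cons a l ih =>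
      intro h
      simp only [List.prod_cons]
      exact mul_pos (h a (by simp)) (ih fun x hx => h x (by simp [hx]))

lemma myprod_le_one : ∀ l : List ℝ, (∀ x ∈ l, 0 ≤ x ∧ x ≤ 1) → l.prod ≤ 1 := by
  intro l
  induction l with
  | nil => simp
  | cons a l ih =>
      intro h
      simp only [List.prod_cons]
      have h1 := h a (by simp)
      have h2 : l.prod ≤ 1 := ih fun x hx => h x (by simp [hx])
      have h3 : 0 ≤ l.prod := myprod_nonneg l fun x hx => (h x (by simp [hx])).1
      nlinarith

/- ### trunc lemmas -/

lemma trunc_length (e : ℕ → Tr) (n : ℕ) : (trunc e n).length = n := by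
  simp [trunc]

lemma trunc_get (e : ℕ → Tr) (n i : ℕ) (h : i < (trunc e n).length) :
    (trunc e n).get ⟨i, h⟩ = e i := by
  simp [trunc]

lemma isPrefixOf_trunc (e : ℕ → Tr) (n : ℕ) : IsPrefixOf (trunc e n) e :=
  fun i h => trunc_get e n i h

lemma trunc_succ_cons (e : ℕ → Tr) (n : ℕ) :
    trunc e (n + 1) = e 0 :: trunc (fun i => e (i + 1)) n := by
  simp [trunc, List.range_succ_eq_map, List.map_map]

lemma trunc_succ_append (e : ℕ → Tr) (n : ℕ) :
    trunc e (n + 1) = trunc e n ++ [e n] := by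
  simp [trunc, List.range_succ]

lemma mem_trunc (e : ℕ → Tr) (n : ℕ) (t : Tr) :
    t ∈ trunc e n ↔ ∃ j < n, e j = t := by
  simp [trunc]

lemma eq_trunc_of_prefix (e : ℕ → Tr) (u : List Tr) (n : ℕ) (hlen : u.length = n)
    (hpre : IsPrefixOf u e) : u = trunc e n := by
  apply List.ext_get (by simp [trunc, hlen])
  intro i h1 h2
  rw [trunc_get]
  exact hpre i h1

/- ### Finite path trees -/

open Classical in
noncomputable def PathsF (F : Finset Tr) (src tgt : Tr → State) :
    ℕ → State → Finset (List Tr)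
  | 0, _ => {[]}
  | n + 1, s =>
      (F.filter fun t => src t = s).biUnion
        fun t => (PathsF F src tgt n (tgt t)).image (t :: ·)

/-- End state of a finite path. -/
def endSt (tgt : Tr → State) (s : State) (l : List Tr) : State :=
  l.foldl (fun _ t => tgt t) s

variable (F : Finset Tr) (src tgt : Tr → State)

lemma endSt_nil (s : State) : endSt tgt s [] = s := rfl

lemma endSt_cons (s : State) (t : Tr) (l : List Tr) :
    endSt tgt s (t :: l) = endSt tgt (tgt t) l := rfl

lemma endSt_append (s : State) (u v : List Tr) :
    endSt tgt s (u ++ v) = endSt tgt (endSt tgt s u) v :=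
  List.foldl_append

lemma mem_pathsF_zero (s : State) (w : List Tr) :
    w ∈ PathsF F src tgt 0 s ↔ w = [] := by
  simp [PathsF]

lemma mem_pathsF_succ (n : ℕ) (s : State) (w : List Tr) :
    w ∈ PathsF F src tgt (n + 1) s ↔
      ∃ t, (t ∈ F ∧ src t = s) ∧ ∃ v ∈ PathsF F src tgt n (tgt t), t :: v = w := by
  simp [PathsF]

lemma pathsF_length (n : ℕ) (s : State) (w : List Tr)
    (hw : w ∈ PathsF F src tgt n s) : w.length = n := by
  induction n generalizing s w with
  | zero => rw [mem_pathsF_zero] at hw; simp [hw]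
  | succ n ih =>
      rw [mem_pathsF_succ] at hw
      obtain ⟨t, _, v, hv, rfl⟩ := hw
      simp [ih _ _ hv]

lemma pathsF_mem_F (n : ℕ) (s : State) (w : List Tr)
    (hw : w ∈ PathsF F src tgt n s) : ∀ t ∈ w, t ∈ F := by
  induction n generalizing s w with
  | zero => rw [mem_pathsF_zero] at hw; simp [hw]
  | succ n ih =>
      rw [mem_pathsF_succ] at hw
      obtain ⟨t, ht, v, hv, rfl⟩ := hw
      intro x hx
      rcases List.mem_cons.1 hx with h | h
      · exact h ▸ ht.1
      · exact ih _ _ hv x h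

lemma endSt_mem (states : Set State) (htgt : ∀ t ∈ F, tgt t ∈ states) :
    ∀ (n : ℕ) (s : State), s ∈ states → ∀ w ∈ PathsF F src tgt n s,
      endSt tgt s w ∈ states := by
  intro n
  induction n with
  | zero =>
      intro s hs w hw
      rw [mem_pathsF_zero] at hw
      simpa [hw, endSt_nil]
  | succ n ih =>
      intro s hs w hw
      rw [mem_pathsF_succ F src tgt] at hw
      obtain ⟨t, ht, v, hv, rfl⟩ := hw
      rw [endSt_cons]
      exact ih (tgt t) (htgt t ht.1) v hv

lemma pathsF_split (n k : ℕ) (s : State) :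
    PathsF F src tgt (n + k) s =
      (PathsF F src tgt n s).biUnion
        fun u => (PathsF F src tgt k (endSt tgt s u)).image (u ++ ·) := by
  classical
  induction n generalizing s with
  | zero =>
      ext w
      simp [PathsF, endSt_nil, Nat.zero_add]
  | succ n ih =>
      have harith : n + 1 + k = (n + k) + 1 := by omega
      ext w
      rw [harith]
      rw [mem_pathsF_succ]
      constructor
      · rintro ⟨t, ht, v, hv, rfl⟩
        rw [ih] at hv
        rcases Finset.mem_biUnion.1 hv with ⟨u, hu, hv'⟩
        rcases Finset.mem_image.1 hv' with ⟨v', hv', rfl⟩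
        refine Finset.mem_biUnion.2 ⟨t :: u, ?_, ?_⟩
        · rw [mem_pathsF_succ]
          exact ⟨t, ht, u, hu, rfl⟩
        · exact Finset.mem_image.2 ⟨v', by rwa [endSt_cons], rfl⟩
      · intro hw
        rcases Finset.mem_biUnion.1 hw with ⟨u, hu, hv'⟩
        rcases Finset.mem_image.1 hv' with ⟨v, hv, rfl⟩
        rw [mem_pathsF_succ] at hu
        obtain ⟨t, ht, u', hu', rfl⟩ := hu
        refine ⟨t, ht, u' ++ v, ?_, rfl⟩
        rw [ih]
        refine Finset.mem_biUnion.2 ⟨u', hu', Finset.mem_image.2 ⟨v, ?_, rfl⟩⟩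
        rwa [endSt_cons] at hv

lemma pathsF_snoc (n : ℕ) (s : State) (w : List Tr) (t : Tr)
    (hw : w ∈ PathsF F src tgt n s) (ht : t ∈ F) (hsrc : src t = endSt tgt s w) :
    w ++ [t] ∈ PathsF F src tgt (n + 1) s := by
  classical
  have h1 : [t] ∈ PathsF F src tgt 1 (endSt tgt s w) := by
    rw [mem_pathsF_succ]
    exact ⟨t, ⟨ht, hsrc⟩, [], (mem_pathsF_zero F src tgt _ _).2 rfl, rfl⟩
  rw [pathsF_split F src tgt n 1]
  exact Finset.mem_biUnion.2 ⟨w, hw, Finset.mem_image.2 ⟨[t], h1, rfl⟩⟩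

lemma trunc_mem_pathsF (e : ℕ → Tr) (hF : ∀ i, e i ∈ F)
    (hchain : ∀ i, src (e (i + 1)) = tgt (e i)) :
    ∀ (n : ℕ) (s : State), src (e 0) = s → trunc e n ∈ PathsF F src tgt n s := by
  intro n
  induction n generalizing e with
  | zero => intro s _; rw [mem_pathsF_zero]; simp [trunc]
  | succ n ih =>
      intro s hs
      rw [trunc_succ_cons, mem_pathsF_succ]
      exact ⟨e 0, ⟨hF 0, hs⟩, trunc (fun i => e (i + 1)) n,
        ih (fun i => e (i + 1)) (fun i => hF (i + 1)) (fun i => hchain (i + 1))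
          (tgt (e 0)) (hchain 0), rfl⟩

lemma endSt_trunc (e : ℕ → Tr) (s : State)
    (hchain : ∀ i, src (e (i + 1)) = tgt (e i)) (hs : src (e 0) = s) :
    ∀ n, endSt tgt s (trunc e n) = src (e n) := by
  intro n
  cases n with
  | zero => simp [trunc, endSt_nil, hs]
  | succ n =>
      rw [trunc_succ_append, endSt_append]
      show tgt (e n) = _
      rw [hchain n]

lemma pathsF_sum_le_one (p : Tr → ℝ) (states : Set State)
    (hone : ∀ s ∈ states, ∑ t ∈ F.filter (fun t => src t = s), p t ≤ 1)
    (hpos : ∀ t ∈ F, 0 ≤ p t)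
    (htgt : ∀ t ∈ F, tgt t ∈ states) :
    ∀ (n : ℕ) (s : State), s ∈ states →
      ∑ w ∈ PathsF F src tgt n s, (w.map p).prod ≤ 1 := by
  intro n
  induction n with
  | zero => intro s _; simp [PathsF]
  | succ n ih =>
      intro s hs
      show ∑ w ∈ Finset.biUnion _ _, _ ≤ 1
      rw [Finset.sum_biUnion]
      · calc ∑ t ∈ F.filter (fun t => src t = s),
              ∑ w ∈ (PathsF F src tgt n (tgt t)).image (t :: ·), (w.map p).prod
            = ∑ t ∈ F.filter (fun t => src t = s),
              ∑ w ∈ PathsF F src tgt n (tgt t), p t * (w.map p).prod := by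
              refine Finset.sum_congr rfl fun t _ => ?_
              rw [Finset.sum_image (fun a _ b _ h => by injection h)]
              simp
          _ ≤ ∑ t ∈ F.filter (fun t => src t = s), p t := by
              refine Finset.sum_le_sum fun t ht => ?_
              rw [← Finset.mul_sum]
              have htF := (Finset.mem_filter.1 ht).1
              exact mul_le_of_le_one_right (hpos t htF) (ih (tgt t) (htgt t htF))
          _ ≤ 1 := hone s hs
      · intro t1 h1 t2 h2 hne
        simp only [Function.onFun, Finset.disjoint_left]
        intro w hw1 hw2
        rcases Finset.mem_image.1 hw1 with ⟨v1, _, rfl⟩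
        rcases Finset.mem_image.1 hw2 with ⟨v2, _, heq⟩
        injection heq with h1' _
        exact hne h1'.symm

lemma pathsF_extend (states : Set State)
    (hex : ∀ s ∈ states, ∃ t ∈ F, src t = s)
    (htgt : ∀ t ∈ F, tgt t ∈ states) (p : Tr → ℝ) (hp : ∀ t ∈ F, 0 < p t) :
    ∀ (j n : ℕ) (s : State), s ∈ states → ∀ w ∈ PathsF F src tgt n s,
      ∃ w' ∈ PathsF F src tgt (n + j) s, (∀ t ∈ w, t ∈ w') ∧
        (0 < (w.map p).prod → 0 < (w'.map p).prod) := by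
  intro j
  induction j with
  | zero => intro n s _ w hw; exact ⟨w, hw, fun t ht => ht, fun h => h⟩
  | succ j ih =>
      intro n s hs w hw
      obtain ⟨w', hw', hsub, hpos⟩ := ih n s hs w hw
      obtain ⟨t, htF, hts⟩ := hex (endSt tgt s w') (endSt_mem F src tgt states htgt _ s hs w' hw')
      refine ⟨w' ++ [t], ?_, ?_, ?_⟩
      · have := pathsF_snoc F src tgt (n + j) s w' t hw' htF hts
        rwa [show n + j + 1 = n + (j + 1) by omega] at this
      · intro x hx; exact List.mem_append_left _ (hsub x hx)
      · intro h
        have := hpos h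
        rw [List.map_append, List.prod_append]
        simpa using mul_pos this (hp t htF)

/- ### PTS one-step lemmas -/

lemma PTS.summable_from (S : PTS State Tr AP) (s : State) (hs : s ∈ S.states) :
    Summable (fun t : { t : Tr // t ∈ S.transitions ∧ S.source t = s } => S.prob t.1) := by
  by_contra h
  have h0 := tsum_eq_zero_of_not_summable h
  rw [S.prob_sum s hs] at h0
  norm_num at h0

lemma PTS.exists_trans_from (S : PTS State Tr AP) (s : State) (hs : s ∈ S.states) :
    ∃ t ∈ S.transitions, S.source t = s := by
  by_contra h
  push_neg at h
  have hem : IsEmpty { t : Tr // t ∈ S.transitions ∧ S.source t = s } :=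
    ⟨fun x => h x.1 x.2.1 x.2.2⟩
  have h0 : (∑' t : { t : Tr // t ∈ S.transitions ∧ S.source t = s }, S.prob t.1) = 0 :=
    tsum_empty
  rw [S.prob_sum s hs] at h0
  norm_num at h0

lemma PTS.sum_from_le_one (S : PTS State Tr AP) (s : State) (hs : s ∈ S.states)
    (G : Finset Tr) (hG : ∀ t ∈ G, t ∈ S.transitions ∧ S.source t = s) :
    ∑ t ∈ G, S.prob t ≤ 1 := by
  classical
  have hinj : Function.Injective
      (fun x : { x : Tr // x ∈ G } => (⟨x.1, hG x.1 x.2⟩ :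
        { t : Tr // t ∈ S.transitions ∧ S.source t = s })) := by
    intro a b hab
    exact Subtype.ext (congrArg (fun y : { t : Tr // t ∈ S.transitions ∧ S.source t = s } => y.1) hab)
  let G' : Finset { t : Tr // t ∈ S.transitions ∧ S.source t = s } :=
    G.attach.map ⟨_, hinj⟩
  have h1 : ∑ x ∈ G', S.prob x.1 = ∑ t ∈ G, S.prob t := by
    rw [Finset.sum_map]
    exact Finset.sum_attach _ _
  have h2 : ∑ x ∈ G', S.prob x.1 ≤
      ∑' t : { t : Tr // t ∈ S.transitions ∧ S.source t = s }, S.prob t.1 :=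
    Summable.sum_le_tsum G' (fun x _ => le_of_lt (S.prob_pos x.1 x.2.1))
      (S.summable_from s hs)
  rw [h1, S.prob_sum s hs] at h2
  exact h2

end Aux

/-- If `T` has not found a violation of the LTL⁺ formula `φ`,
then the paths of `S_T` satisfying `φ` outside `B_{S_T}^φ(T)` have measure
zero, hence `μ_{S_T}(B_{S_T}^φ(T)) = μ_{S_T}({e ∈ Exec_{S_T} : e ⊨ φ})`. -/
theorem measure_diff_zero_of_not_found_violation {State Tr AP : Type}
    (S ST : PTS State Tr AP) (T : Finset Tr) (hT : ↑T ⊆ S.transitions)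
    (hST : IsMinExt S T ST) (φ : LTLPlus AP)
    (μ : MeasureTheory.Measure (ℕ → Tr)) (hμ : CylSpec ST μ)
    (hnv : NotFoundViolation S T { ρ | LTLSat φ ρ }) :
    μ ({ e | ST.IsExec e ∧ ST.SatPath e { ρ | LTLSat φ ρ } } \
        ST.BPhi T { ρ | LTLSat φ ρ }) = 0 ∧
    μ (ST.BPhi T { ρ | LTLSat φ ρ }) =
      μ { e | ST.IsExec e ∧ ST.SatPath e { ρ | LTLSat φ ρ } } := by
  classical
  obtain ⟨sbot, tbot, ts, hsbot, hts_notT, htbot_notT, hts_ne, hts_inj, hstates_eq,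
    htrans_eq, hinit_eq, hTdata, htsdata, htbot_src, htbot_tgt, htbot_prob, hlbot, hlab⟩ := hST
  obtain ⟨S', ⟨hextT, hextinit, hextdata⟩, hsat⟩ := hnv
  set Φ : Set (ℕ → Set AP) := { ρ | LTLSat φ ρ } with hΦdef
  -- finiteness
  have hE_fin : (STStates S T).Finite :=
    ((T.finite_toSet.image S.source).union (T.finite_toSet.image S.target)).union
      (Set.finite_singleton S.init)
  have hdiv_fin : ({ s ∈ STStates S T | outP S T s < 1 }).Finite :=
    hE_fin.subset (Set.sep_subset _ _)
  have htrans_fin : ST.transitions.Finite := by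
    rw [htrans_eq]
    exact (T.finite_toSet.union (hdiv_fin.image ts)).union (Set.finite_singleton tbot)
  have hstates_fin : ST.states.Finite := by
    rw [hstates_eq]
    exact hE_fin.union (Set.finite_singleton sbot)
  set F : Finset Tr := htrans_fin.toFinset with hFdef
  have hF : ∀ t : Tr, t ∈ F ↔ t ∈ ST.transitions := fun t => htrans_fin.mem_toFinset
  -- data of explored transitions
  have hsrcT : ∀ t ∈ T, ST.source t = S.source t := fun t ht => (hTdata t ht).1
  have htgtT : ∀ t ∈ T, ST.target t = S.target t := fun t ht => (hTdata t ht).2.1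
  have hsrc_mem_E : ∀ t ∈ T, S.source t ∈ STStates S T := fun t ht =>
    Or.inl (Or.inl ⟨t, ht, rfl⟩)
  have htgt_mem_E : ∀ t ∈ T, S.target t ∈ STStates S T := fun t ht =>
    Or.inl (Or.inr ⟨t, ht, rfl⟩)
  have hTtrans : ∀ t ∈ T, t ∈ ST.transitions := fun t ht => by
    rw [htrans_eq]; exact Or.inl (Or.inl ht)
  -- classification of transitions
  have hsrc_sbot : ∀ t ∈ ST.transitions, ST.source t = sbot → t = tbot := by
    intro t ht hsrc
    rw [htrans_eq] at ht
    rcases ht with (htT | hts') | htb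
    · exfalso
      apply hsbot
      have hss : S.source t = sbot := by rw [← hsrcT t htT]; exact hsrc
      rw [← hss]
      exact hsrc_mem_E t htT
    · obtain ⟨s, hs, rfl⟩ := hts'
      have hd := htsdata s hs.1 hs.2
      rw [hd.1] at hsrc
      exact absurd (hsrc ▸ hs.1) hsbot
    · exact htb
  have htgt_sink : ∀ t ∈ ST.transitions, t ∉ T → ST.target t = sbot := by
    intro t ht htT
    rw [htrans_eq] at ht
    rcases ht with (h | hts') | htb
    · exact absurd h htT
    · obtain ⟨s, hs, rfl⟩ := hts'
      exact (htsdata s hs.1 hs.2).2.1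
    · rw [htb]; exact htbot_tgt
  -- all-T executions satisfy φ
  have hexecT_sat : ∀ e, ST.IsExec e → (∀ i, e i ∈ T) → ST.SatPath e Φ := by
    intro e he hall
    have hex' : S'.IsExec e := by
      refine ⟨fun i => hextT _ (hall i), ?_, ?_⟩
      · rw [(hextdata _ (hall 0)).1, ← hsrcT _ (hall 0), he.2.1, hinit_eq, hextinit]
      · intro i
        rw [(hextdata _ (hall i)).2.1, (hextdata _ (hall (i+1))).1,
          ← htgtT _ (hall i), ← hsrcT _ (hall (i+1))]
        exact he.2.2 i
    have htr : ST.traceOf e = S'.traceOf e := by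
      funext i
      show ST.label (ST.source (e i)) = S'.label (S'.source (e i))
      rw [hsrcT _ (hall i), hlab _ (hsrc_mem_E _ (hall i))]
      exact ((hextdata _ (hall i)).2.2.2.1).symm
    show ST.traceOf e ∈ Φ
    rw [htr]
    exact hsat e hex'
  -- executions leaving T are in a good cylinder
  have hgood_notT : ∀ e, ST.IsExec e → ST.SatPath e Φ → (∃ i, e i ∉ T) →
      e ∈ ST.BPhi T Φ := by
    intro e he hsate hex
    have hi₀ : e (Nat.find hex) ∉ T := Nat.find_spec hex
    set i₀ := Nat.find hex with hi₀def
    have hlt : ∀ j < i₀, e j ∈ T := fun j hj => not_not.1 (Nat.find_min hex hj)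
    have htgt_all : ∀ k, ST.target (e (i₀ + k)) = sbot := by
      intro k
      induction k with
      | zero => exact htgt_sink _ (he.1 i₀) hi₀
      | succ k ih =>
          have hsrc : ST.source (e (i₀ + k + 1)) = sbot := by rw [← he.2.2 (i₀ + k)]; exact ih
          show ST.target (e (i₀ + k + 1)) = sbot
          rw [hsrc_sbot _ (he.1 _) hsrc]
          exact htbot_tgt
    have hsrc_after : ∀ i, i₀ < i → ST.source (e i) = sbot := by
      intro i hi
      obtain ⟨k, rfl⟩ : ∃ k, i = i₀ + k + 1 := ⟨i - i₀ - 1, by omega⟩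
      rw [← he.2.2 (i₀ + k)]
      exact htgt_all k
    have hmem : trunc e i₀ ∈ { l : List Tr |
        (∀ t ∈ l, t ∈ T) ∧ ∀ e' ∈ ST.Cyl l, ST.SatPath e' Φ } := by
      constructor
      · intro t ht
        rw [mem_trunc] at ht
        obtain ⟨j, hj, rfl⟩ := ht
        exact hlt j hj
      · intro e' he'
        have hpre := he'.2
        have heq : ∀ j < i₀, e' j = e j := fun j hj => by
          have h1 := hpre j (by rw [trunc_length]; exact hj)
          rw [trunc_get] at h1
          exact h1.symm
        have hsrci₀ : ST.source (e' i₀) = ST.source (e i₀) := by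
          rcases Nat.eq_zero_or_pos i₀ with h0 | h0
          · rw [h0, he'.1.2.1, he.2.1]
          · obtain ⟨m, hm⟩ : ∃ m, i₀ = m + 1 := ⟨i₀ - 1, by omega⟩
            rw [hm, ← he'.1.2.2 m, ← he.2.2 m, heq m (by omega)]
        have hsub : ∀ i, ST.traceOf e i ⊆ ST.traceOf e' i := by
          intro i
          rcases lt_trichotomy i i₀ with h | h | h
          · have : ST.traceOf e' i = ST.traceOf e i := by
              show ST.label (ST.source (e' i)) = ST.label (ST.source (e i))
              rw [heq i h]
            rw [this]
          · have : ST.traceOf e' i = ST.traceOf e i := by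
              show ST.label (ST.source (e' i)) = ST.label (ST.source (e i))
              rw [h, hsrci₀]
            rw [this]
          · have : ST.traceOf e i = ∅ := by
              show ST.label (ST.source (e i)) = ∅
              rw [hsrc_after i h, hlbot]
            rw [this]
            exact Set.empty_subset _
        exact LTLSat.mono φ _ _ hsub hsate
    exact Set.mem_biUnion hmem ⟨he, isPrefixOf_trunc e i₀⟩
  -- one-step sums
  have htgtF : ∀ t ∈ F, ST.target t ∈ ST.states := fun t ht => ST.target_mem t ((hF t).1 ht)
  have hpF : ∀ t ∈ F, 0 < ST.prob t := fun t ht => ST.prob_pos t ((hF t).1 ht)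
  have hexF : ∀ s ∈ ST.states, ∃ t ∈ F, ST.source t = s := by
    intro s hs
    obtain ⟨t, ht, hts'⟩ := ST.exists_trans_from s hs
    exact ⟨t, (hF t).2 ht, hts'⟩
  have honestep : ∀ s ∈ ST.states,
      ∑ t ∈ F.filter (fun t => ST.source t = s), ST.prob t ≤ 1 := by
    intro s hs
    exact ST.sum_from_le_one s hs _ (fun t ht =>
      ⟨(hF t).1 (Finset.mem_filter.1 ht).1, (Finset.mem_filter.1 ht).2⟩)
  have hwp_nonneg : ∀ (w : List Tr), (∀ t ∈ w, t ∈ F) → 0 ≤ (w.map ST.prob).prod := by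
    intro w hw
    refine myprod_nonneg _ fun x hx => ?_
    obtain ⟨t, ht, rfl⟩ := List.mem_map.1 hx
    exact le_of_lt (hpF t (hw t ht))
  -- structure of violating prefixes
  have hViol_struct : ∀ (n : ℕ) (u : List Tr),
      u ∈ PathsF F ST.source ST.target n ST.init → (∀ t ∈ u, t ∈ T) →
      (∃ e ∈ ST.Cyl u, ¬ ST.SatPath e Φ) →
      endSt ST.target ST.init u ∈ ST.states ∧
        (∃ k, ∃ w ∈ PathsF F ST.source ST.target k (endSt ST.target ST.init u),
          ∃ t ∈ w, t ∉ T) := by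
    intro n u hu hallT hviol
    obtain ⟨e', ⟨he', hpre⟩, hns⟩ := hviol
    have hlen : u.length = n := pathsF_length F ST.source ST.target n ST.init u hu
    have hu_eq : u = trunc e' n := eq_trunc_of_prefix e' u n hlen hpre
    have hchain' : ∀ i, ST.source (e' (i+1)) = ST.target (e' i) := fun i => (he'.2.2 i).symm
    have hend : endSt ST.target ST.init u = ST.source (e' n) := by
      rw [hu_eq]
      exact endSt_trunc ST.source ST.target e' ST.init hchain' he'.2.1 n
    constructor
    · rw [hend]
      exact ST.source_mem _ (he'.1 n)
    · have hnotall : ¬ ∀ i, e' i ∈ T := fun hall => hns (hexecT_sat e' he' hall)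
      push_neg at hnotall
      obtain ⟨i, hiT⟩ := hnotall
      have hin : n ≤ i := by
        by_contra hc
        push_neg at hc
        apply hiT
        have hg := hpre i (by rw [hlen]; exact hc)
        rw [← hg]
        exact hallT _ (List.get_mem u _)
      refine ⟨i + 1 - n, trunc (fun j => e' (n + j)) (i + 1 - n), ?_, ?_⟩
      · refine trunc_mem_pathsF F ST.source ST.target (fun j => e' (n + j))
          (fun j => (hF _).2 (he'.1 (n + j))) (fun j => hchain' (n + j)) _ _ ?_
        exact hend.symm
      · refine ⟨e' i, ?_, hiT⟩
        rw [mem_trunc]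
        exact ⟨i - n, by omega, by rw [show n + (i - n) = i by omega]⟩
  -- uniform witnesses
  have hKδ : ∃ K δ, 0 < δ ∧ δ ≤ 1 ∧ ∀ s ∈ ST.states,
      (∃ k, ∃ w ∈ PathsF F ST.source ST.target k s, ∃ t ∈ w, t ∉ T) →
      ∃ w ∈ PathsF F ST.source ST.target K s,
        (¬ ∀ t ∈ w, t ∈ T) ∧ δ ≤ (w.map ST.prob).prod := by
    set SkF : Finset State := hstates_fin.toFinset.filter
      (fun s => ∃ k, ∃ w ∈ PathsF F ST.source ST.target k s, ∃ t ∈ w, t ∉ T) with hSkFdef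
    by_cases hSkF : SkF.Nonempty
    · have hSk : ∀ s ∈ SkF, ∃ k, ∃ w ∈ PathsF F ST.source ST.target k s, ∃ t ∈ w, t ∉ T :=
        fun s hs => (Finset.mem_filter.1 hs).2
      choose k w hw1 hw2 using hSk
      set K := SkF.sup (fun s => if h : s ∈ SkF then k s h else 0) with hKdef
      have hKk : ∀ s (hs : s ∈ SkF), k s hs ≤ K := by
        intro s hs
        have h1 : (if h : s ∈ SkF then k s h else 0) ≤ K :=
          Finset.le_sup (f := fun s => if h : s ∈ SkF then k s h else 0) hs
        rwa [dif_pos hs] at h1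
      have hpad : ∀ s (hs : s ∈ SkF), ∃ w', w' ∈ PathsF F ST.source ST.target K s ∧
          (∃ t ∈ w', t ∉ T) ∧ 0 < (w'.map ST.prob).prod ∧ (w'.map ST.prob).prod ≤ 1 := by
        intro s hs
        have hsst : s ∈ ST.states := hstates_fin.mem_toFinset.1 (Finset.mem_filter.1 hs).1
        obtain ⟨w', hw', hsub, hpos⟩ := pathsF_extend F ST.source ST.target ST.states hexF
          htgtF ST.prob hpF (K - k s hs) (k s hs) s hsst (w s hs) (hw1 s hs)
        rw [Nat.add_sub_cancel' (hKk s hs)] at hw'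
        have hposw : 0 < ((w s hs).map ST.prob).prod := by
          refine myprod_pos _ fun x hx => ?_
          obtain ⟨t, ht, rfl⟩ := List.mem_map.1 hx
          exact hpF t (pathsF_mem_F F ST.source ST.target _ _ _ (hw1 s hs) t ht)
        refine ⟨w', hw', ?_, hpos hposw, ?_⟩
        · obtain ⟨t, htw, htT⟩ := hw2 s hs
          exact ⟨t, hsub t htw, htT⟩
        · refine myprod_le_one _ fun x hx => ?_
          obtain ⟨t, ht, rfl⟩ := List.mem_map.1 hx
          have htF := pathsF_mem_F F ST.source ST.target _ _ _ hw' t ht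
          exact ⟨le_of_lt (hpF t htF), ST.prob_le_one t ((hF t).1 htF)⟩
      choose W hW hWnT hWpos hWle using hpad
      have hnea : ((SkF.attach.image fun x => ((W x.1 x.2).map ST.prob).prod)).Nonempty :=
        (Finset.attach_nonempty_iff.2 hSkF).image _
      set δ := ((SkF.attach.image fun x => ((W x.1 x.2).map ST.prob).prod)).min' hnea with hδdef
      have hδle : ∀ s (hs : s ∈ SkF), δ ≤ ((W s hs).map ST.prob).prod := fun s hs =>
        Finset.min'_le _ _ (Finset.mem_image.2 ⟨⟨s, hs⟩, Finset.mem_attach _ _, rfl⟩)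
      obtain ⟨x, _, hx⟩ := Finset.mem_image.1 (Finset.min'_mem _ hnea)
      refine ⟨K, δ, ?_, ?_, ?_⟩
      · rw [hδdef, ← hx]; exact hWpos x.1 x.2
      · rw [hδdef, ← hx]; exact hWle x.1 x.2
      · intro s hs hsk
        have hmem : s ∈ SkF := Finset.mem_filter.2 ⟨hstates_fin.mem_toFinset.2 hs, hsk⟩
        refine ⟨W s hmem, hW s hmem, ?_, hδle s hmem⟩
        obtain ⟨t, htw, htT⟩ := hWnT s hmem
        exact fun hall => htT (hall t htw)
    · exact ⟨0, 1, one_pos, le_refl 1, fun s hs hsk =>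
        absurd ⟨s, Finset.mem_filter.2 ⟨hstates_fin.mem_toFinset.2 hs, hsk⟩⟩ hSkF⟩
  obtain ⟨K, δ, hδpos, hδ1, hwit⟩ := hKδ
  -- bad prefixes
  set Pred : List Tr → Prop := fun l =>
    (∀ t ∈ l, t ∈ T) ∧ ∃ e ∈ ST.Cyl l, ¬ ST.SatPath e Φ with hPreddef
  set BadF : ℕ → Finset (List Tr) := fun n =>
    (PathsF F ST.source ST.target n ST.init).filter Pred with hBadFdef
  set Sn : ℕ → ℝ := fun n => ∑ l ∈ BadF n, (l.map ST.prob).prod with hSndef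
  have hdecay : ∀ n, Sn (n + K) ≤ (1 - δ) * Sn n := by
    intro n
    have hdisj : (↑(PathsF F ST.source ST.target n ST.init) : Set (List Tr)).PairwiseDisjoint
        (fun u => (PathsF F ST.source ST.target K (endSt ST.target ST.init u)).image
          (u ++ ·)) := by
      intro u1 h1 u2 h2 hne12
      simp only [Function.onFun, Finset.disjoint_left]
      intro l hl1 hl2
      rcases Finset.mem_image.1 hl1 with ⟨v1, hv1, rfl⟩
      rcases Finset.mem_image.1 hl2 with ⟨v2, hv2, heq⟩
      have hlen1 : u1.length = n :=
        pathsF_length F ST.source ST.target n ST.init u1 (Finset.mem_coe.1 h1)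
      have hlen2 : u2.length = n :=
        pathsF_length F ST.source ST.target n ST.init u2 (Finset.mem_coe.1 h2)
      exact hne12 ((List.append_inj heq (by rw [hlen1, hlen2])).1).symm
    have hstep1 : Sn (n + K) = ∑ u ∈ PathsF F ST.source ST.target n ST.init,
        ∑ v ∈ PathsF F ST.source ST.target K (endSt ST.target ST.init u),
          if Pred (u ++ v) then ((u ++ v).map ST.prob).prod else 0 := by
      show ∑ l ∈ (PathsF F ST.source ST.target (n + K) ST.init).filter Pred,
          (l.map ST.prob).prod = _
      rw [Finset.sum_filter, pathsF_split F ST.source ST.target n K ST.init,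
        Finset.sum_biUnion hdisj]
      refine Finset.sum_congr rfl fun u hu => ?_
      rw [Finset.sum_image (fun a _ b _ h => (List.append_inj h rfl).2)]
    have hstep2 : ∀ u ∈ PathsF F ST.source ST.target n ST.init,
        (∑ v ∈ PathsF F ST.source ST.target K (endSt ST.target ST.init u),
          if Pred (u ++ v) then ((u ++ v).map ST.prob).prod else 0) ≤
        (if Pred u then (u.map ST.prob).prod * (1 - δ) else 0) := by
      intro u hu
      by_cases hPu : Pred u
      · rw [if_pos hPu]
        obtain ⟨hust, hsk⟩ := hViol_struct n u hu hPu.1 hPu.2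
        obtain ⟨wst, hwstF, hwstnT, hwstδ⟩ := hwit _ hust hsk
        have hunn : 0 ≤ (u.map ST.prob).prod :=
          hwp_nonneg u (pathsF_mem_F F ST.source ST.target n ST.init u hu)
        rw [← Finset.sum_filter]
        have hsubset : (PathsF F ST.source ST.target K (endSt ST.target ST.init u)).filter
            (fun v => Pred (u ++ v)) ⊆
            (PathsF F ST.source ST.target K (endSt ST.target ST.init u)).erase wst := by
          intro v hv
          rcases Finset.mem_filter.1 hv with ⟨hvV, hPuv⟩
          refine Finset.mem_erase.2 ⟨?_, hvV⟩
          rintro rfl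
          exact hwstnT fun t htw => hPuv.1 t (List.mem_append_right u htw)
        calc ∑ v ∈ (PathsF F ST.source ST.target K (endSt ST.target ST.init u)).filter
              (fun v => Pred (u ++ v)), ((u ++ v).map ST.prob).prod
            ≤ ∑ v ∈ (PathsF F ST.source ST.target K (endSt ST.target ST.init u)).erase wst,
              ((u ++ v).map ST.prob).prod := by
              refine Finset.sum_le_sum_of_subset_of_nonneg hsubset fun v hv _ => ?_
              have hvF := pathsF_mem_F F ST.source ST.target K _ v
                (Finset.mem_of_mem_erase hv)
              refine hwp_nonneg _ fun t ht => ?_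
              rcases List.mem_append.1 ht with h | h
              · exact pathsF_mem_F F ST.source ST.target n ST.init u hu t h
              · exact hvF t h
          _ = (u.map ST.prob).prod *
              ∑ v ∈ (PathsF F ST.source ST.target K (endSt ST.target ST.init u)).erase wst,
                (v.map ST.prob).prod := by
              rw [Finset.mul_sum]
              refine Finset.sum_congr rfl fun v hv => ?_
              rw [List.map_append, List.prod_append]
          _ ≤ (u.map ST.prob).prod * (1 - δ) := by
              refine mul_le_mul_of_nonneg_left ?_ hunn
              rw [Finset.sum_erase_eq_sub hwstF]
              have hsum := pathsF_sum_le_one F ST.source ST.target ST.prob ST.states honestep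
                (fun t ht => le_of_lt (hpF t ht)) htgtF K _ hust
              linarith [hwstδ]
      · rw [if_neg hPu]
        refine le_of_eq (Finset.sum_eq_zero fun v hv => ?_)
        rw [if_neg]
        intro hPuv
        apply hPu
        constructor
        · exact fun t ht => hPuv.1 t (List.mem_append_left _ ht)
        · obtain ⟨e0, he0, hns⟩ := hPuv.2
          refine ⟨e0, ⟨he0.1, ?_⟩, hns⟩
          intro i hi
          have hiu : i < (u ++ v).length := by
            rw [List.length_append]; omega
          have h1 := he0.2 i hiu
          rw [← h1]
          simp only [List.get_eq_getElem]
          exact (List.getElem_append_left hi).symm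
    calc Sn (n + K) = _ := hstep1
      _ ≤ ∑ u ∈ PathsF F ST.source ST.target n ST.init,
          (if Pred u then (u.map ST.prob).prod * (1 - δ) else 0) :=
          Finset.sum_le_sum hstep2
      _ = (1 - δ) * Sn n := by
          have hflt : ∑ u ∈ PathsF F ST.source ST.target n ST.init,
              (if Pred u then (u.map ST.prob).prod * (1 - δ) else 0)
              = ∑ u ∈ (PathsF F ST.source ST.target n ST.init).filter Pred,
                (u.map ST.prob).prod * (1 - δ) := (Finset.sum_filter _ _).symm
          rw [hflt]
          show _ = (1 - δ) *
            ∑ l ∈ (PathsF F ST.source ST.target n ST.init).filter Pred, (l.map ST.prob).prod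
          rw [Finset.mul_sum]
          exact Finset.sum_congr rfl fun u hu => mul_comm _ _
  have hS0 : Sn 0 ≤ 1 := by
    show ∑ l ∈ (PathsF F ST.source ST.target 0 ST.init).filter Pred,
        (l.map ST.prob).prod ≤ 1
    have hsub : (PathsF F ST.source ST.target 0 ST.init).filter Pred ⊆ {[]} := by
      intro l hl
      have hl0 := (Finset.mem_filter.1 hl).1
      rw [mem_pathsF_zero] at hl0
      simp [hl0]
    rcases Finset.subset_singleton_iff.1 hsub with h | h <;> simp [h]
  have hgeom : ∀ j, Sn (K * j) ≤ (1 - δ) ^ j := by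
    intro j
    induction j with
    | zero => simpa using hS0
    | succ j ih =>
        rw [show K * (j + 1) = K * j + K by ring, pow_succ]
        calc Sn (K * j + K) ≤ (1 - δ) * Sn (K * j) := hdecay _
          _ ≤ (1 - δ) * (1 - δ) ^ j := mul_le_mul_of_nonneg_left ih (by linarith)
          _ = (1 - δ) ^ j * (1 - δ) := mul_comm _ _
  -- covering the difference set
  have hcover : ∀ n, ({ e | ST.IsExec e ∧ ST.SatPath e Φ } \ ST.BPhi T Φ) ⊆
      ⋃ l ∈ (BadF n : Finset (List Tr)), ST.Cyl l := by
    intro n e he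
    obtain ⟨⟨hex, hsat_e⟩, hnB⟩ := he
    have hallT : ∀ i, e i ∈ T := by
      by_contra hc
      push_neg at hc
      exact hnB (hgood_notT e hex hsat_e hc)
    have hmem : trunc e n ∈ BadF n := by
      refine Finset.mem_filter.2 ⟨?_, ?_, ?_⟩
      · exact trunc_mem_pathsF F ST.source ST.target e (fun i => (hF _).2 (hex.1 i))
          (fun i => (hex.2.2 i).symm) n ST.init hex.2.1
      · intro t ht
        rw [mem_trunc] at ht
        obtain ⟨j, _, rfl⟩ := ht
        exact hallT j
      · by_contra hc
        push_neg at hc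
        apply hnB
        exact Set.mem_biUnion
          (show trunc e n ∈ { l : List Tr | (∀ t ∈ l, t ∈ T) ∧
            ∀ e' ∈ ST.Cyl l, ST.SatPath e' Φ } from
            ⟨fun t ht => by
              rw [mem_trunc] at ht
              obtain ⟨j, _, rfl⟩ := ht
              exact hallT j, hc⟩)
          ⟨hex, isPrefixOf_trunc e n⟩
    exact Set.mem_biUnion (Finset.mem_coe.2 hmem) ⟨hex, isPrefixOf_trunc e n⟩
  have hμn : ∀ n, μ ({ e | ST.IsExec e ∧ ST.SatPath e Φ } \ ST.BPhi T Φ) ≤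
      ENNReal.ofReal (Sn n) := by
    intro n
    calc μ ({ e | ST.IsExec e ∧ ST.SatPath e Φ } \ ST.BPhi T Φ)
        ≤ μ (⋃ l ∈ (BadF n : Finset (List Tr)), ST.Cyl l) := measure_mono (hcover n)
      _ ≤ ∑ l ∈ BadF n, μ (ST.Cyl l) := measure_biUnion_finset_le _ _
      _ = ∑ l ∈ BadF n, ENNReal.ofReal ((l.map ST.prob).prod) := by
          refine Finset.sum_congr rfl fun l hl => ?_
          have hPl := (Finset.mem_filter.1 hl).2
          obtain ⟨e0, he0, _⟩ := hPl.2
          exact hμ l ⟨e0, he0.1, he0.2⟩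
      _ = ENNReal.ofReal (Sn n) := by
          rw [hSndef]
          rw [ENNReal.ofReal_sum_of_nonneg]
          intro l hl
          exact hwp_nonneg l (pathsF_mem_F F ST.source ST.target n ST.init l
            (Finset.mem_filter.1 hl).1)
  have hD0 : μ ({ e | ST.IsExec e ∧ ST.SatPath e Φ } \ ST.BPhi T Φ) = 0 := by
    by_contra h0
    have hfin : μ ({ e | ST.IsExec e ∧ ST.SatPath e Φ } \ ST.BPhi T Φ) ≠ ⊤ :=
      ne_top_of_le_ne_top ENNReal.ofReal_ne_top (hμn 0)
    have hpos : 0 < (μ ({ e | ST.IsExec e ∧ ST.SatPath e Φ } \ ST.BPhi T Φ)).toReal :=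
      ENNReal.toReal_pos h0 hfin
    obtain ⟨j, hj⟩ := exists_pow_lt_of_lt_one hpos (by linarith : 1 - δ < 1)
    have h2 : μ ({ e | ST.IsExec e ∧ ST.SatPath e Φ } \ ST.BPhi T Φ) ≤
        ENNReal.ofReal ((1 - δ) ^ j) :=
      le_trans (hμn (K * j)) (ENNReal.ofReal_le_ofReal (hgeom j))
    have h3 : ENNReal.ofReal ((1 - δ) ^ j) <
        ENNReal.ofReal ((μ ({ e | ST.IsExec e ∧ ST.SatPath e Φ } \ ST.BPhi T Φ)).toReal) :=
      (ENNReal.ofReal_lt_ofReal_iff hpos).2 hj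
    rw [ENNReal.ofReal_toReal hfin] at h3
    exact absurd (lt_of_le_of_lt h2 h3) (lt_irrefl _)
  refine ⟨hD0, ?_⟩
  have hBsub : ST.BPhi T Φ ⊆ { e | ST.IsExec e ∧ ST.SatPath e Φ } := by
    intro e he
    obtain ⟨l, hl, hel⟩ := Set.mem_iUnion₂.1 he
    exact ⟨hel.1, hl.2 e hel⟩
  refine le_antisymm (measure_mono hBsub) ?_
  calc μ { e | ST.IsExec e ∧ ST.SatPath e Φ }
      ≤ μ (ST.BPhi T Φ ∪ ({ e | ST.IsExec e ∧ ST.SatPath e Φ } \ ST.BPhi T Φ)) := by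
        refine measure_mono fun x hx => ?_
        by_cases h : x ∈ ST.BPhi T Φ
        · exact Or.inl h
        · exact Or.inr ⟨hx, h⟩
    _ ≤ μ (ST.BPhi T Φ) + μ ({ e | ST.IsExec e ∧ ST.SatPath e Φ } \ ST.BPhi T Φ) :=
        measure_union_le _ _
    _ = μ (ST.BPhi T Φ) := by rw [hD0, add_zero]
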